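/- arXiv:2412.07994 — 2 statements merged into one kernel-verified Lean document; each statement's English description precedes it below -/
import Mathlib

section
/- Let G be a group generated by a finite symmetric set with word length ℓ, H ≤ G a subgroup, and π : G → G/H the left-coset projection. If G/H has subexponential growth, i.e. limsup_{n→∞} |π(B(n))|^{1/n} = 1, then for every finitely supported f : G → ℂ the spectral radii in ℓ¹ and in the hybrid operator norm agree: limsup_{n→∞} ‖f^{(n)}‖₁^{1/n} = limsup_{n→∞} ‖f^{(n)}‖_h^{1/n}, where f^{(n)} denotes the n-fold convolution power of f. -/
open scoped BigOperators

attribute [local instance] Classical.propDecidable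

section Defs

variable {G : Type*} [Group G]

/-- Word length with respect to a generating set `S`. -/
noncomputable def wordLength (S : Set G) (x : G) : ℕ :=
  sInf {n | ∃ l : List G, (∀ s ∈ l, s ∈ S) ∧ l.length = n ∧ l.prod = x}

/-- Convolution of finitely supported functions:
`(f * ϕ) x = ∑ z, f z * ϕ (z⁻¹ * x)`. -/
noncomputable def conv {k : Type*} [Semiring k] (f ϕ : G →₀ k) : G →₀ k :=
  f.sum fun z c => c • Finsupp.mapDomain (fun x => z * x) ϕ

/-- `n`-fold convolution power. -/
noncomputable def convPow {k : Type*} [Semiring k] (f : G →₀ k) : ℕ → G →₀ k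
  | 0 => Finsupp.single 1 1
  | n + 1 => conv f (convPow f n)

/-- ℓ² norm of a finitely supported function. -/
noncomputable def l2Norm {α k : Type*} [NormedAddCommGroup k] (f : α →₀ k) : ℝ :=
  Real.sqrt (∑ x ∈ f.support, ‖f x‖ ^ 2)

/-- ℓ¹ norm of a finitely supported function. -/
noncomputable def l1Norm {α k : Type*} [NormedAddCommGroup k] (f : α →₀ k) : ℝ :=
  ∑ x ∈ f.support, ‖f x‖

/-- The hybrid `(2,1)` norm with respect to the subgroup `H`:
`‖f‖_{(2,1)} = sqrt (∑_{gH ∈ G/H} (∑_{x ∈ gH} |f x|)²)`. -/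
noncomputable def l21Norm (H : Subgroup G) {k : Type*} [NormedAddCommGroup k]
    (f : G →₀ k) : ℝ :=
  l2Norm (Finsupp.mapDomain (QuotientGroup.mk : G → G ⧸ H) (f.mapRange norm norm_zero))

/-- Hybrid operator norm `‖f‖_h`. -/
noncomputable def hybridOpNorm (H : Subgroup G) (f : G →₀ ℂ) : ℝ :=
  sSup {c : ℝ | ∃ ϕ : G →₀ ℂ, l21Norm H ϕ ≤ 1 ∧ c = l21Norm H (conv f ϕ)}

/-- Regular operator norm `‖f‖_*`. -/
noncomputable def regOpNorm (f : G →₀ ℂ) : ℝ :=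
  sSup {c : ℝ | ∃ ξ : G →₀ ℂ, l2Norm ξ ≤ 1 ∧ c = l2Norm (conv f ξ)}

/-- The quasi-regular representation:
`(λ_{G/H}(f) ξ)(gH) = ∑ z, f z * ξ (z⁻¹ g H)`. -/
noncomputable def quasiReg (H : Subgroup G) (f : G →₀ ℂ) (ξ : (G ⧸ H) →₀ ℂ) :
    (G ⧸ H) →₀ ℂ :=
  f.sum fun z c => c • Finsupp.mapDomain (fun q => z • q) ξ

/-- Quasi-regular operator norm `‖λ_{G/H}(f)‖`. -/
noncomputable def quasiRegOpNorm (H : Subgroup G) (f : G →₀ ℂ) : ℝ :=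
  sSup {c : ℝ | ∃ ξ : (G ⧸ H) →₀ ℂ, l2Norm ξ ≤ 1 ∧ c = l2Norm (quasiReg H f ξ)}

/-- Embed a real finitely supported function into the complex valued ones. -/
noncomputable def toC {α : Type*} (f : α →₀ ℝ) : α →₀ ℂ :=
  f.mapRange Complex.ofReal Complex.ofReal_zero

/-- Pointwise weight of a function by `(1 + ℓ)^s`. -/
noncomputable def weight (S : Set G) (s : ℝ) (f : G →₀ ℂ) : G →₀ ℂ where
  support := f.support
  toFun x := ((((1 : ℝ) + (wordLength S x : ℝ)) ^ s : ℝ) : ℂ) * f x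
  mem_support_toFun x := by
    simp only [Finsupp.mem_support_iff]
    have hpos : (0 : ℝ) < ((1 : ℝ) + (wordLength S x : ℝ)) ^ s :=
      Real.rpow_pos_of_pos (by positivity) s
    constructor
    · intro hf h
      rcases mul_eq_zero.mp h with h1 | h2
      · exact hpos.ne' (by exact_mod_cast h1)
      · exact hf h2
    · intro h hf
      exact h (by rw [hf, mul_zero])

/-- The involution `f⋆ x = f x⁻¹`. -/
noncomputable def starFun {k : Type*} [Zero k] (f : G →₀ k) : G →₀ k :=
  Finsupp.equivMapDomain (Equiv.inv G) f

/-- Sum of the values of `g` over the subgroup `H`. -/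
noncomputable def sumOverSubgroup (H : Subgroup G) (g : G →₀ ℝ) : ℝ :=
  ∑ x ∈ g.support.filter (fun x => x ∈ H), g x

/-- `f` is supported in the ball of radius `R` for the word length of `S`. -/
def supportedInBall (S : Set G) (R : ℕ) {k : Type*} [Zero k] (f : G →₀ k) : Prop :=
  ∀ x ∈ f.support, wordLength S x ≤ R

/-- Rapid decay property for the pair `(G, H)`. -/
def PairRD (S : Set G) (H : Subgroup G) : Prop :=
  ∃ C : ℝ, ∃ D : ℕ, 0 ≤ C ∧ ∀ (R : ℕ) (f ϕ : G →₀ ℂ), supportedInBall S R f →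
    l21Norm H (conv f ϕ) ≤ C * ((R : ℝ) + 1) ^ D * l21Norm H f * l21Norm H ϕ

/-- Rapid decay property for the group `G`. -/
def GroupRD (S : Set G) : Prop :=
  ∃ C : ℝ, ∃ D : ℕ, 0 ≤ C ∧ ∀ (R : ℕ) (f ϕ : G →₀ ℂ), supportedInBall S R f →
    l2Norm (conv f ϕ) ≤ C * ((R : ℝ) + 1) ^ D * l2Norm f * l2Norm ϕ

/-- Polynomial growth of a subgroup for the induced length. -/
def polyGrowthSubgroup (S : Set G) (H : Subgroup G) : Prop :=
  ∃ C : ℝ, ∃ D : ℕ, 0 ≤ C ∧ ∀ R : ℕ,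
    (Set.ncard {x : G | x ∈ H ∧ wordLength S x ≤ R} : ℝ) ≤ C * ((R : ℝ) + 1) ^ D

/-- Polynomial growth of the coset space `G/H`. -/
def polyGrowthQuotient (S : Set G) (H : Subgroup G) : Prop :=
  ∃ C : ℝ, ∃ D : ℕ, 0 ≤ C ∧ ∀ R : ℕ,
    (Set.ncard ((QuotientGroup.mk : G → G ⧸ H) '' {x : G | wordLength S x ≤ R}) : ℝ) ≤
      C * ((R : ℝ) + 1) ^ D

/-- Co-amenability of `H` in `G`: Følner condition for the left action on `G/H`. -/
def Coamenable (H : Subgroup G) : Prop :=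
  ∀ ε : ℝ, 0 < ε → ∀ F : Finset G, ∃ V : Finset (G ⧸ H), V.Nonempty ∧
    ((symmDiff (Finset.image₂ (· • ·) F V) V).card : ℝ) ≤ ε * (V.card : ℝ)

/-- Matrix coefficient `⟨λ_{G/H}(γ) ξ, η⟩` of the quasi-regular representation
on `ℓ²(G/H)`. -/
noncomputable def qrCoeff (H : Subgroup G) (γ : G)
    (ξ η : lp (fun _ : G ⧸ H => ℂ) 2) : ℂ :=
  ∑' q : G ⧸ H, ξ (γ⁻¹ • q) * (starRingEnd ℂ) (η q)

/-- The spectral radius of the random walk induced on `G/H`: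
`ρ = limsup P_{2n}(H,H)^{1/(2n)}`. -/
noncomputable def specRadQuot (H : Subgroup G) (μ : G →₀ ℝ) : ℝ :=
  Filter.limsup (fun n : ℕ =>
    (sumOverSubgroup H (convPow μ (2 * n))) ^ ((1 : ℝ) / (2 * (n : ℝ)))) Filter.atTop

end Defs
section Helpers

open Finsupp Filter

variable {α β : Type*}

/-! ### basic norm lemmas -/

lemma l1Norm_nonneg {k : Type*} [NormedAddCommGroup k] (f : α →₀ k) : 0 ≤ l1Norm f :=
  Finset.sum_nonneg fun _ _ => norm_nonneg _

lemma l2Norm_nonneg {k : Type*} [NormedAddCommGroup k] (f : α →₀ k) : 0 ≤ l2Norm f :=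
  Real.sqrt_nonneg _

lemma l1Norm_eq_sum {k : Type*} [NormedAddCommGroup k] {f : α →₀ k} {t : Finset α}
    (h : f.support ⊆ t) : l1Norm f = ∑ x ∈ t, ‖f x‖ :=
  Finset.sum_subset h fun x _ hx => by
    simp [Finsupp.notMem_support_iff.mp hx]

lemma l2Norm_eq_sum {k : Type*} [NormedAddCommGroup k] {f : α →₀ k} {t : Finset α}
    (h : f.support ⊆ t) : l2Norm f = Real.sqrt (∑ x ∈ t, ‖f x‖ ^ 2) := by
  unfold l2Norm
  congr 1
  exact Finset.sum_subset h fun x _ hx => by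
    simp [Finsupp.notMem_support_iff.mp hx]

lemma l1Norm_zero {k : Type*} [NormedAddCommGroup k] : l1Norm (0 : α →₀ k) = 0 := by
  simp [l1Norm]

lemma l2Norm_zero {k : Type*} [NormedAddCommGroup k] : l2Norm (0 : α →₀ k) = 0 := by
  simp [l2Norm]

lemma l1Norm_add_le {k : Type*} [NormedAddCommGroup k] (f g : α →₀ k) :
    l1Norm (f + g) ≤ l1Norm f + l1Norm g := by
  classical
  rw [l1Norm_eq_sum (t := f.support ∪ g.support) Finsupp.support_add,
      l1Norm_eq_sum (t := f.support ∪ g.support) Finset.subset_union_left,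
      l1Norm_eq_sum (t := f.support ∪ g.support) Finset.subset_union_right,
      ← Finset.sum_add_distrib]
  exact Finset.sum_le_sum fun x _ => by
    rw [Finsupp.add_apply]; exact norm_add_le _ _

lemma l1Norm_sum_le {k : Type*} [NormedAddCommGroup k] {ι : Type*} (s : Finset ι)
    (F : ι → α →₀ k) : l1Norm (∑ i ∈ s, F i) ≤ ∑ i ∈ s, l1Norm (F i) := by
  classical
  induction s using Finset.cons_induction with
  | empty => simp [l1Norm_zero]
  | cons a s ha ih =>
      rw [Finset.sum_cons, Finset.sum_cons]
      exact (l1Norm_add_le _ _).trans (by linarith)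

lemma l1Norm_smul_le (c : ℂ) (f : α →₀ ℂ) : l1Norm (c • f) ≤ ‖c‖ * l1Norm f := by
  rw [l1Norm_eq_sum (Finsupp.support_smul (b := c) (g := f)), l1Norm, Finset.mul_sum]
  exact Finset.sum_le_sum fun x _ => by
    rw [Finsupp.smul_apply, smul_eq_mul, norm_mul]

lemma l1Norm_equivMapDomain {k : Type*} [NormedAddCommGroup k] (e : α ≃ β) (f : α →₀ k) :
    l1Norm (Finsupp.equivMapDomain e f) = l1Norm f := by
  classical
  have hs : (Finsupp.equivMapDomain e f).support ⊆ f.support.map e.toEmbedding := by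
    intro x hx
    rw [Finsupp.mem_support_iff] at hx
    simp only [Finsupp.equivMapDomain_apply] at hx
    exact Finset.mem_map.mpr ⟨e.symm x, Finsupp.mem_support_iff.mpr hx, by simp⟩
  rw [l1Norm_eq_sum hs, Finset.sum_map, l1Norm]
  exact Finset.sum_congr rfl fun x _ => by simp

lemma l2Norm_equivMapDomain {k : Type*} [NormedAddCommGroup k] (e : α ≃ β) (f : α →₀ k) :
    l2Norm (Finsupp.equivMapDomain e f) = l2Norm f := by
  classical
  have hs : (Finsupp.equivMapDomain e f).support ⊆ f.support.map e.toEmbedding := by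
    intro x hx
    rw [Finsupp.mem_support_iff] at hx
    simp only [Finsupp.equivMapDomain_apply] at hx
    exact Finset.mem_map.mpr ⟨e.symm x, Finsupp.mem_support_iff.mpr hx, by simp⟩
  rw [l2Norm_eq_sum hs, Finset.sum_map]
  unfold l2Norm
  congr 1
  exact Finset.sum_congr rfl fun x _ => by simp

lemma l2Norm_add_le (f g : α →₀ ℝ) : l2Norm (f + g) ≤ l2Norm f + l2Norm g := by
  classical
  set t := f.support ∪ g.support with ht
  let x : EuclideanSpace ℝ t := WithLp.toLp 2 (fun i => f i)
  let y : EuclideanSpace ℝ t := WithLp.toLp 2 (fun i => g i)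
  have hx : l2Norm f = ‖x‖ := by
    rw [l2Norm_eq_sum (t := t) Finset.subset_union_left, EuclideanSpace.norm_eq]
    congr 1
    rw [← Finset.sum_coe_sort t fun a => ‖f a‖ ^ 2]
  have hy : l2Norm g = ‖y‖ := by
    rw [l2Norm_eq_sum (t := t) Finset.subset_union_right, EuclideanSpace.norm_eq]
    congr 1
    rw [← Finset.sum_coe_sort t fun a => ‖g a‖ ^ 2]
  have hxy : l2Norm (f + g) = ‖x + y‖ := by
    rw [l2Norm_eq_sum (t := t) Finsupp.support_add, EuclideanSpace.norm_eq]
    congr 1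
    rw [← Finset.sum_coe_sort t fun a => ‖(f + g) a‖ ^ 2]
    refine Finset.sum_congr rfl fun i _ => ?_
    have hxyi : (x + y) i = f i + g i := by rw [WithLp.ofLp_add]; rfl
    rw [hxyi, Finsupp.add_apply]
  rw [hx, hy, hxy]
  exact norm_add_le x y

lemma l2Norm_mono {u v : α →₀ ℝ} (h0 : ∀ x, 0 ≤ u x) (h : ∀ x, u x ≤ v x) :
    l2Norm u ≤ l2Norm v := by
  classical
  rw [l2Norm_eq_sum (t := u.support ∪ v.support) Finset.subset_union_left,
      l2Norm_eq_sum (t := u.support ∪ v.support) Finset.subset_union_right]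
  apply Real.sqrt_le_sqrt
  apply Finset.sum_le_sum
  intro i _
  rw [Real.norm_eq_abs, Real.norm_eq_abs, abs_of_nonneg (h0 i),
      abs_of_nonneg ((h0 i).trans (h i))]
  exact pow_le_pow_left₀ (h0 i) (h i) 2

lemma l2Norm_smul_le (r : ℝ) (u : α →₀ ℝ) : l2Norm (r • u) ≤ |r| * l2Norm u := by
  have h1 : l2Norm (r • u) = Real.sqrt (∑ x ∈ u.support, r ^ 2 * ‖u x‖ ^ 2) := by
    rw [l2Norm_eq_sum (Finsupp.support_smul (b := r) (g := u))]
    congr 1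
    refine Finset.sum_congr rfl fun x _ => ?_
    rw [Finsupp.smul_apply, smul_eq_mul, norm_mul, mul_pow, Real.norm_eq_abs, sq_abs]
  rw [h1, ← Finset.mul_sum, Real.sqrt_mul (sq_nonneg r), Real.sqrt_sq_eq_abs]
  exact le_of_eq rfl

end Helpers

section GroupHelpers

open Finsupp Filter

variable {α β : Type*} {G : Type*} [Group G]

lemma mapDomain_apply_nonneg (h : α → β) {u : α →₀ ℝ} (hu : ∀ x, 0 ≤ u x) (b : β) :
    0 ≤ Finsupp.mapDomain h u b := by
  classical
  rw [Finsupp.mapDomain, Finsupp.sum_apply, Finsupp.sum]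
  refine Finset.sum_nonneg fun i _ => ?_
  rw [Finsupp.single_apply]
  split <;> simp [hu i]

lemma mapDomain_mono (h : α → β) {u v : α →₀ ℝ} (huv : ∀ x, u x ≤ v x) (b : β) :
    Finsupp.mapDomain h u b ≤ Finsupp.mapDomain h v b := by
  have hv : v = u + (v - u) := by ext x; simp
  have h0 : ∀ x, 0 ≤ (v - u) x := fun x => by
    rw [Finsupp.sub_apply]; linarith [huv x]
  calc Finsupp.mapDomain h u b
      ≤ Finsupp.mapDomain h u b + Finsupp.mapDomain h (v - u) b := by
        linarith [mapDomain_apply_nonneg h h0 b]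
    _ = Finsupp.mapDomain h v b := by
        conv_rhs => rw [hv]
        rw [Finsupp.mapDomain_add, Finsupp.add_apply]

lemma l21Norm_nonneg (H : Subgroup G) (f : G →₀ ℂ) : 0 ≤ l21Norm H f :=
  l2Norm_nonneg _

lemma l21Norm_zero (H : Subgroup G) : l21Norm H (0 : G →₀ ℂ) = 0 := by
  unfold l21Norm
  rw [Finsupp.mapRange_zero, Finsupp.mapDomain_zero, l2Norm_zero]

lemma l21Norm_add_le (H : Subgroup G) (f g : G →₀ ℂ) :
    l21Norm H (f + g) ≤ l21Norm H f + l21Norm H g := by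
  classical
  unfold l21Norm
  refine le_trans (l2Norm_mono
      (u := Finsupp.mapDomain (QuotientGroup.mk : G → G ⧸ H)
        ((f + g).mapRange norm norm_zero)) ?_ ?_) (l2Norm_add_le _ _)
  · exact mapDomain_apply_nonneg _ (fun x => by simp [Finsupp.mapRange_apply])
  · intro b
    rw [← Finsupp.mapDomain_add]
    refine mapDomain_mono _ (fun x => ?_) b
    simp only [Finsupp.mapRange_apply, Finsupp.add_apply]
    exact norm_add_le _ _

lemma l21Norm_sum_le (H : Subgroup G) {ι : Type*} (s : Finset ι) (F : ι → G →₀ ℂ) :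
    l21Norm H (∑ i ∈ s, F i) ≤ ∑ i ∈ s, l21Norm H (F i) := by
  classical
  induction s using Finset.cons_induction with
  | empty => simp [l21Norm_zero]
  | cons a s ha ih =>
      rw [Finset.sum_cons, Finset.sum_cons]
      exact (l21Norm_add_le H _ _).trans (by linarith)

lemma l21Norm_smul_le (H : Subgroup G) (c : ℂ) (f : G →₀ ℂ) :
    l21Norm H (c • f) ≤ ‖c‖ * l21Norm H f := by
  have h1 : (c • f).mapRange norm norm_zero = ‖c‖ • f.mapRange norm norm_zero := by
    ext x
    simp only [Finsupp.mapRange_apply, Finsupp.smul_apply, smul_eq_mul, norm_mul]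
  unfold l21Norm
  rw [h1, Finsupp.mapDomain_smul]
  exact (l2Norm_smul_le _ _).trans (le_of_eq (by rw [abs_norm]))

lemma l21Norm_shift (H : Subgroup G) (z : G) (f : G →₀ ℂ) :
    l21Norm H (Finsupp.mapDomain (fun x => z * x) f) = l21Norm H f := by
  classical
  have h0 : Finsupp.mapDomain (fun x => z * x) f
      = Finsupp.equivMapDomain (Equiv.mulLeft z) f := by
    rw [Finsupp.equivMapDomain_eq_mapDomain, Equiv.coe_mulLeft]
  have h1 : (Finsupp.equivMapDomain (Equiv.mulLeft z) f).mapRange norm norm_zero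
      = Finsupp.equivMapDomain (Equiv.mulLeft z) (f.mapRange norm norm_zero) := by
    ext x; simp
  unfold l21Norm
  rw [h0, h1, Finsupp.equivMapDomain_eq_mapDomain, ← Finsupp.mapDomain_comp]
  have h2 : ((QuotientGroup.mk : G → G ⧸ H) ∘ ⇑(Equiv.mulLeft z))
      = (fun q : G ⧸ H => z • q) ∘ (QuotientGroup.mk : G → G ⧸ H) := by
    funext x; rfl
  rw [h2, Finsupp.mapDomain_comp]
  have h3 : Finsupp.mapDomain (fun q : G ⧸ H => z • q)
      (Finsupp.mapDomain (QuotientGroup.mk : G → G ⧸ H) (f.mapRange norm norm_zero))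
      = Finsupp.equivMapDomain (MulAction.toPerm z)
        (Finsupp.mapDomain (QuotientGroup.mk : G → G ⧸ H) (f.mapRange norm norm_zero)) := by
    rw [Finsupp.equivMapDomain_eq_mapDomain]
    rfl
  rw [h3, l2Norm_equivMapDomain]

lemma l1Norm_shift (z : G) (f : G →₀ ℂ) :
    l1Norm (Finsupp.mapDomain (fun x => z * x) f) = l1Norm f := by
  rw [show (fun x => z * x) = ⇑(Equiv.mulLeft z) from funext fun x => by simp,
    ← Finsupp.equivMapDomain_eq_mapDomain, l1Norm_equivMapDomain]

lemma conv_zero (f : G →₀ ℂ) : conv f 0 = 0 := by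
  unfold conv
  simp

lemma conv_single_one (f : G →₀ ℂ) : conv f (Finsupp.single 1 1) = f := by
  unfold conv
  have h : ∀ z : G, ∀ c : ℂ,
      c • Finsupp.mapDomain (fun x => z * x) (Finsupp.single (1 : G) (1 : ℂ))
        = Finsupp.single z c := by
    intro z c
    rw [Finsupp.mapDomain_single, mul_one, Finsupp.smul_single, smul_eq_mul, mul_one]
  rw [Finsupp.sum_congr fun z _ => h z (f z)]
  exact Finsupp.sum_single f

lemma l1Norm_single_one : l1Norm (Finsupp.single (1 : G) (1 : ℂ)) = 1 := by
  rw [l1Norm, Finsupp.support_single_ne_zero _ one_ne_zero]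
  simp

lemma l21Norm_single_one (H : Subgroup G) :
    l21Norm H (Finsupp.single (1 : G) (1 : ℂ)) = 1 := by
  unfold l21Norm
  rw [Finsupp.mapRange_single, Finsupp.mapDomain_single]
  unfold l2Norm
  rw [Finsupp.support_single_ne_zero _ (by norm_num : ‖(1:ℂ)‖ ≠ 0)]
  simp

lemma l21Norm_conv_le (H : Subgroup G) (f g : G →₀ ℂ) :
    l21Norm H (conv f g) ≤ l1Norm f * l21Norm H g := by
  unfold conv
  rw [Finsupp.sum]
  refine (l21Norm_sum_le H _ _).trans ?_
  rw [l1Norm, Finset.sum_mul]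
  refine Finset.sum_le_sum fun z hz => ?_
  refine (l21Norm_smul_le H _ _).trans ?_
  rw [l21Norm_shift]

lemma l1Norm_conv_le (f g : G →₀ ℂ) : l1Norm (conv f g) ≤ l1Norm f * l1Norm g := by
  unfold conv
  rw [Finsupp.sum]
  refine (l1Norm_sum_le _ _).trans ?_
  calc ∑ z ∈ f.support, l1Norm (f z • Finsupp.mapDomain (fun x => z * x) g)
      ≤ ∑ z ∈ f.support, ‖f z‖ * l1Norm g := by
        refine Finset.sum_le_sum fun z hz => ?_
        refine (l1Norm_smul_le _ _).trans ?_
        rw [l1Norm_shift]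
    _ = (∑ z ∈ f.support, ‖f z‖) * l1Norm g := by rw [Finset.sum_mul]
    _ = l1Norm f * l1Norm g := rfl

lemma l1Norm_convPow_le (f : G →₀ ℂ) (n : ℕ) :
    l1Norm (convPow f n) ≤ l1Norm f ^ n := by
  induction n with
  | zero => simp [convPow, l1Norm_single_one]
  | succ n ih =>
      calc l1Norm (convPow f (n + 1)) = l1Norm (conv f (convPow f n)) := rfl
        _ ≤ l1Norm f * l1Norm (convPow f n) := l1Norm_conv_le f _
        _ ≤ l1Norm f * l1Norm f ^ n :=
            mul_le_mul_of_nonneg_left ih (l1Norm_nonneg f)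
        _ = l1Norm f ^ (n + 1) := (pow_succ' _ _).symm

lemma hybrid_bddAbove (H : Subgroup G) (f : G →₀ ℂ) :
    ∀ c ∈ {c : ℝ | ∃ ϕ : G →₀ ℂ, l21Norm H ϕ ≤ 1 ∧ c = l21Norm H (conv f ϕ)},
      c ≤ l1Norm f := by
  rintro c ⟨ϕ, hϕ, rfl⟩
  calc l21Norm H (conv f ϕ) ≤ l1Norm f * l21Norm H ϕ := l21Norm_conv_le H f ϕ
    _ ≤ l1Norm f * 1 := mul_le_mul_of_nonneg_left hϕ (l1Norm_nonneg f)
    _ = l1Norm f := mul_one _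

lemma hybridOpNorm_nonneg (H : Subgroup G) (f : G →₀ ℂ) : 0 ≤ hybridOpNorm H f := by
  refine le_csSup ⟨l1Norm f, hybrid_bddAbove H f⟩ ?_
  exact ⟨0, by rw [l21Norm_zero]; norm_num, by rw [conv_zero, l21Norm_zero]⟩

lemma hybridOpNorm_le_l1 (H : Subgroup G) (f : G →₀ ℂ) : hybridOpNorm H f ≤ l1Norm f :=
  Real.sSup_le (hybrid_bddAbove H f) (l1Norm_nonneg f)

lemma l21_le_hybridOpNorm (H : Subgroup G) (f : G →₀ ℂ) :
    l21Norm H f ≤ hybridOpNorm H f := by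
  refine le_csSup ⟨l1Norm f, hybrid_bddAbove H f⟩ ?_
  exact ⟨Finsupp.single 1 1, by rw [l21Norm_single_one],
    by rw [conv_single_one]⟩

lemma l1_le_sqrt_card_mul_l21 (H : Subgroup G) (g : G →₀ ℂ) :
    l1Norm g ≤ Real.sqrt ((Finsupp.mapDomain (QuotientGroup.mk : G → G ⧸ H)
        (g.mapRange norm norm_zero)).support.card) * l21Norm H g := by
  classical
  set u := Finsupp.mapDomain (QuotientGroup.mk : G → G ⧸ H)
    (g.mapRange norm norm_zero) with hu
  have h1 : l1Norm g = ∑ q ∈ u.support, u q := by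
    have e1 : u.sum (fun _ v => v) = (g.mapRange norm norm_zero).sum fun _ v => v := by
      rw [hu]
      exact Finsupp.sum_mapDomain_index (fun _ => rfl) (fun _ _ _ => rfl)
    have e2 : (g.mapRange norm norm_zero).sum (fun _ v => v) = g.sum fun _ b => ‖b‖ :=
      Finsupp.sum_mapRange_index fun _ => rfl
    rw [show l1Norm g = g.sum (fun _ b => ‖b‖) from rfl, ← e2, ← e1]
    rfl
  have h3 : Real.sqrt (∑ q ∈ u.support, (u q) ^ 2) = l21Norm H g := by
    unfold l21Norm l2Norm
    rw [← hu]
    congr 1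
    exact Finset.sum_congr rfl fun q _ => by rw [Real.norm_eq_abs, sq_abs]
  calc l1Norm g = ∑ q ∈ u.support, (1:ℝ) * u q := by rw [h1]; simp
    _ ≤ Real.sqrt (∑ q ∈ u.support, (1:ℝ) ^ 2)
        * Real.sqrt (∑ q ∈ u.support, (u q) ^ 2) :=
        Real.sum_mul_le_sqrt_mul_sqrt _ _ _
    _ = Real.sqrt (u.support.card) * l21Norm H g := by
        rw [h3]
        congr 2
        simp

end GroupHelpers

section Words

open Finsupp Filter

variable {G : Type*} [Group G] {S : Set G}

lemma exists_word (hsym : ∀ s ∈ S, s⁻¹ ∈ S) (hgen : Subgroup.closure S = ⊤) (x : G) :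
    ∃ l : List G, (∀ s ∈ l, s ∈ S) ∧ l.prod = x := by
  have hx : x ∈ Subgroup.closure S := by rw [hgen]; exact Subgroup.mem_top x
  induction hx using Subgroup.closure_induction with
  | mem s hs => exact ⟨[s], by simpa using hs, by simp⟩
  | one => exact ⟨[], by simp, by simp⟩
  | mul a b _ _ ha hb =>
      obtain ⟨la, h1, h2⟩ := ha
      obtain ⟨lb, h3, h4⟩ := hb
      refine ⟨la ++ lb, ?_, by rw [List.prod_append, h2, h4]⟩
      intro s hs
      rcases List.mem_append.mp hs with h | h
      exacts [h1 s h, h3 s h]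
  | inv a _ ha =>
      obtain ⟨la, h1, h2⟩ := ha
      refine ⟨(la.map fun s => s⁻¹).reverse, ?_, ?_⟩
      · intro s hs
        rw [List.mem_reverse, List.mem_map] at hs
        obtain ⟨t, ht, rfl⟩ := hs
        exact hsym t (h1 t ht)
      · rw [← List.prod_inv_reverse, h2]

lemma wordLength_le_length {x : G} {l : List G} (hl : ∀ s ∈ l, s ∈ S)
    (hp : l.prod = x) : wordLength S x ≤ l.length :=
  Nat.sInf_le ⟨l, hl, rfl, hp⟩

lemma exists_min_word (hsym : ∀ s ∈ S, s⁻¹ ∈ S) (hgen : Subgroup.closure S = ⊤)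
    (x : G) : ∃ l : List G, (∀ s ∈ l, s ∈ S) ∧ l.length = wordLength S x ∧
      l.prod = x := by
  have hne : {n : ℕ | ∃ l : List G, (∀ s ∈ l, s ∈ S) ∧ l.length = n ∧
      l.prod = x}.Nonempty := by
    obtain ⟨l, h1, h2⟩ := exists_word hsym hgen x
    exact ⟨l.length, l, h1, rfl, h2⟩
  exact Nat.sInf_mem hne

lemma wordLength_one : wordLength S (1 : G) = 0 :=
  Nat.le_zero.mp (wordLength_le_length (l := []) (by simp) (by simp))

lemma wordLength_mul_le (hsym : ∀ s ∈ S, s⁻¹ ∈ S) (hgen : Subgroup.closure S = ⊤)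
    (x y : G) : wordLength S (x * y) ≤ wordLength S x + wordLength S y := by
  obtain ⟨lx, hx1, hx2, hx3⟩ := exists_min_word hsym hgen x
  obtain ⟨ly, hy1, hy2, hy3⟩ := exists_min_word hsym hgen y
  have := wordLength_le_length (l := lx ++ ly) (x := x * y)
    (fun s hs => by rcases List.mem_append.mp hs with h | h; exacts [hx1 s h, hy1 s h])
    (by rw [List.prod_append, hx3, hy3])
  rwa [List.length_append, hx2, hy2] at this

lemma supportedInBall_conv (hsym : ∀ s ∈ S, s⁻¹ ∈ S) (hgen : Subgroup.closure S = ⊤)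
    {A B : ℕ} {f g : G →₀ ℂ} (hf : supportedInBall S A f)
    (hg : supportedInBall S B g) : supportedInBall S (A + B) (conv f g) := by
  classical
  intro x hx
  unfold conv at hx
  have hx' := Finsupp.support_sum hx
  rw [Finset.mem_biUnion] at hx'
  obtain ⟨z, hz, hxz⟩ := hx'
  have hxz' := Finsupp.support_smul hxz
  have hxz'' := Finsupp.mapDomain_support hxz'
  rw [Finset.mem_image] at hxz''
  obtain ⟨y, hy, rfl⟩ := hxz''
  calc wordLength S (z * y) ≤ wordLength S z + wordLength S y :=
        wordLength_mul_le hsym hgen z y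
    _ ≤ A + B := add_le_add (hf z hz) (hg y hy)

lemma supportedInBall_convPow (hsym : ∀ s ∈ S, s⁻¹ ∈ S)
    (hgen : Subgroup.closure S = ⊤) {R : ℕ} {f : G →₀ ℂ}
    (hf : supportedInBall S R f) (n : ℕ) :
    supportedInBall S (n * R) (convPow f n) := by
  induction n with
  | zero =>
      intro x hx
      have : x = 1 := by
        by_contra hne
        have := Finsupp.support_single_subset (a := (1:G)) (b := (1:ℂ)) hx
        simp at this
        exact hne this
      rw [this, wordLength_one]
      exact Nat.zero_le _
  | succ n ih =>
      have h := supportedInBall_conv hsym hgen hf ih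
      have : R + n * R = (n + 1) * R := by ring
      rw [this] at h
      exact h

lemma wordLength_succ_cover (hsym : ∀ s ∈ S, s⁻¹ ∈ S)
    (hgen : Subgroup.closure S = ⊤) {R : ℕ} {x : G}
    (hx : wordLength S x ≤ R + 1) :
    ∃ s y, s ∈ insert (1:G) S ∧ wordLength S y ≤ R ∧ x = s * y := by
  obtain ⟨l, h1, h2, h3⟩ := exists_min_word hsym hgen x
  cases l with
  | nil =>
      refine ⟨1, x, Set.mem_insert 1 S, ?_, (one_mul x).symm⟩
      have : wordLength S x = 0 := by rw [← h2]; rfl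
      omega
  | cons s l' =>
      refine ⟨s, l'.prod, Set.mem_insert_of_mem _ (h1 s List.mem_cons_self), ?_, ?_⟩
      · have hlen : l'.length + 1 = wordLength S x := by
          simpa using h2
        have := wordLength_le_length (l := l') (x := l'.prod)
          (fun t ht => h1 t (List.mem_cons_of_mem s ht)) rfl
        omega
      · rw [← h3, List.prod_cons]

lemma ball_finite (hfin : S.Finite) (hsym : ∀ s ∈ S, s⁻¹ ∈ S)
    (hgen : Subgroup.closure S = ⊤) (R : ℕ) :
    {x : G | wordLength S x ≤ R}.Finite := by
  induction R with
  | zero =>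
      refine Set.Finite.subset (Set.finite_singleton 1) ?_
      intro x hx
      obtain ⟨l, h1, h2, h3⟩ := exists_min_word hsym hgen x
      have hl : l.length = 0 := by
        have : wordLength S x ≤ 0 := hx
        omega
      rw [List.length_eq_zero_iff.mp hl] at h3
      simp only [List.prod_nil] at h3
      simp [← h3]
  | succ R ih =>
      refine Set.Finite.subset (Set.Finite.image2 (fun s y => s * y)
        (hfin.insert 1) ih) ?_
      intro x hx
      obtain ⟨s, y, hs, hy, rfl⟩ := wordLength_succ_cover hsym hgen hx
      exact Set.mem_image2_of_mem hs hy

lemma card_support_le_ball (H : Subgroup G) {R : ℕ} {g : G →₀ ℂ}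
    (hb : {x : G | wordLength S x ≤ R}.Finite) (hg : supportedInBall S R g) :
    ((Finsupp.mapDomain (QuotientGroup.mk : G → G ⧸ H)
        (g.mapRange norm norm_zero)).support.card : ℝ)
      ≤ (Set.ncard ((QuotientGroup.mk : G → G ⧸ H) ''
          {x : G | wordLength S x ≤ R}) : ℝ) := by
  classical
  have h1 : (Finsupp.mapDomain (QuotientGroup.mk : G → G ⧸ H)
      (g.mapRange norm norm_zero)).support
        ⊆ g.support.image (QuotientGroup.mk : G → G ⧸ H) :=
    Finsupp.mapDomain_support.trans (Finset.image_subset_image Finsupp.support_mapRange)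
  have h2 : (↑(g.support.image (QuotientGroup.mk : G → G ⧸ H)) : Set (G ⧸ H))
      ⊆ (QuotientGroup.mk : G → G ⧸ H) '' {x : G | wordLength S x ≤ R} := by
    intro q hq
    rw [Finset.coe_image] at hq
    obtain ⟨x, hx, rfl⟩ := hq
    exact ⟨x, hg x hx, rfl⟩
  have h3 := Set.ncard_le_ncard
    ((Finset.coe_subset.mpr h1).trans h2) (hb.image _)
  rw [Set.ncard_coe_finset] at h3
  exact_mod_cast h3

end Words

/-- if `G/H` has subexponential growth, the spectral radii in
`ℓ¹` and in the hybrid operator norm agree for every finitely supported `f`. -/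
theorem statement11 {G : Type*} [Group G] (S : Set G) (hfin : S.Finite)
    (hsym : ∀ s ∈ S, s⁻¹ ∈ S) (hgen : Subgroup.closure S = ⊤) (H : Subgroup G)
    (hsub : Filter.limsup (fun n : ℕ =>
        (Set.ncard ((QuotientGroup.mk : G → G ⧸ H) ''
          {x : G | wordLength S x ≤ n}) : ℝ) ^ ((1 : ℝ) / (n : ℝ)))
        Filter.atTop = 1) :
    ∀ f : G →₀ ℂ,
      Filter.limsup (fun n : ℕ => (l1Norm (convPow f n)) ^ ((1 : ℝ) / (n : ℝ)))
          Filter.atTop =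
        Filter.limsup (fun n : ℕ =>
          (hybridOpNorm H (convPow f n)) ^ ((1 : ℝ) / (n : ℝ))) Filter.atTop := by
  intro f
  classical
  set R : ℕ := max 1 (f.support.sup (wordLength S)) with hR
  have hR1 : 1 ≤ R := le_max_left _ _
  have hfball : supportedInBall S R f := fun x hx =>
    le_trans (Finset.le_sup hx) (le_max_right _ _)
  set u : ℕ → ℝ := fun n : ℕ => (l1Norm (convPow f n)) ^ ((1 : ℝ) / (n : ℝ)) with hudef
  set v : ℕ → ℝ := fun n : ℕ =>
    (hybridOpNorm H (convPow f n)) ^ ((1 : ℝ) / (n : ℝ)) with hvdef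
  set a : ℕ → ℝ := fun m : ℕ => (Set.ncard ((QuotientGroup.mk : G → G ⧸ H) ''
    {x : G | wordLength S x ≤ m}) : ℝ) with hadef
  have hsub' : Filter.limsup (fun m : ℕ => a m ^ ((1 : ℝ) / (m : ℝ)))
      Filter.atTop = 1 := hsub
  have hM : ∀ n, l1Norm (convPow f n) ≤ (max 1 (l1Norm f)) ^ n := fun n =>
    (l1Norm_convPow_le f n).trans
      (pow_le_pow_left₀ (l1Norm_nonneg f) (le_max_right _ _) n)
  have hu_nonneg : ∀ n, 0 ≤ u n := fun n => Real.rpow_nonneg (l1Norm_nonneg _) _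
  have hv_nonneg : ∀ n, 0 ≤ v n := fun n =>
    Real.rpow_nonneg (hybridOpNorm_nonneg H _) _
  have hu_bdd : ∀ n, u n ≤ max 1 (l1Norm f) := by
    intro n
    rcases Nat.eq_zero_or_pos n with rfl | hn
    · have : u 0 = 1 := by
        simp [hudef]
      rw [this]
      exact le_max_left _ _
    · have h1 : u n ≤ ((max 1 (l1Norm f)) ^ n) ^ ((1 : ℝ) / (n : ℝ)) :=
        Real.rpow_le_rpow (l1Norm_nonneg _) (hM n) (by positivity)
      rwa [one_div, Real.pow_rpow_inv_natCast
        (le_trans zero_le_one (le_max_left _ _)) hn.ne'] at h1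
  have hv_le_u : ∀ n, v n ≤ u n := fun n =>
    Real.rpow_le_rpow (hybridOpNorm_nonneg H _) (hybridOpNorm_le_l1 H _)
      (by positivity)
  have hubd : Filter.IsBoundedUnder (· ≤ ·) Filter.atTop u :=
    Filter.isBoundedUnder_of ⟨max 1 (l1Norm f), hu_bdd⟩
  have hvbd : Filter.IsBoundedUnder (· ≤ ·) Filter.atTop v :=
    Filter.isBoundedUnder_of
      ⟨max 1 (l1Norm f), fun n => (hv_le_u n).trans (hu_bdd n)⟩
  have hucb : Filter.IsCoboundedUnder (· ≤ ·) Filter.atTop u :=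
    Filter.isCoboundedUnder_le_of_le Filter.atTop hu_nonneg
  have hvcb : Filter.IsCoboundedUnder (· ≤ ·) Filter.atTop v :=
    Filter.isCoboundedUnder_le_of_le Filter.atTop hv_nonneg
  refine le_antisymm ?_
    (Filter.limsup_le_limsup (Filter.Eventually.of_forall hv_le_u) hvcb hubd)
  -- hard direction
  have hgbd : Filter.IsBoundedUnder (· ≤ ·) Filter.atTop
      (fun m : ℕ => a m ^ ((1 : ℝ) / (m : ℝ))) := by
    by_contra hb
    have hempty : {c : ℝ | ∀ᶠ m in Filter.atTop, a m ^ ((1 : ℝ) / (m : ℝ)) ≤ c}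
        = ∅ := by
      ext c
      simp only [Set.mem_setOf_eq, Set.mem_empty_iff_false, iff_false]
      intro hc
      exact hb ⟨c, by rwa [Filter.eventually_map]⟩
    rw [Filter.limsup_eq, hempty, Real.sInf_empty] at hsub'
    exact one_ne_zero hsub'.symm
  have hkey : ∀ n : ℕ, 1 ≤ n →
      u n ≤ (Real.sqrt (a (n * R))) ^ ((1 : ℝ) / (n : ℝ)) * v n := by
    intro n hn
    have hball : supportedInBall S (n * R) (convPow f n) :=
      supportedInBall_convPow hsym hgen hfball n
    have hfinb : {x : G | wordLength S x ≤ n * R}.Finite :=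
      ball_finite hfin hsym hgen _
    have h1 : l1Norm (convPow f n)
        ≤ Real.sqrt (a (n * R)) * hybridOpNorm H (convPow f n) := by
      refine (l1_le_sqrt_card_mul_l21 H (convPow f n)).trans ?_
      exact mul_le_mul (Real.sqrt_le_sqrt (card_support_le_ball H hfinb hball))
        (l21_le_hybridOpNorm H _) (l21Norm_nonneg H _) (Real.sqrt_nonneg _)
    have h2 : u n ≤ (Real.sqrt (a (n * R)) * hybridOpNorm H (convPow f n))
        ^ ((1 : ℝ) / (n : ℝ)) :=
      Real.rpow_le_rpow (l1Norm_nonneg _) h1 (by positivity)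
    rwa [Real.mul_rpow (Real.sqrt_nonneg _) (hybridOpNorm_nonneg H _)] at h2
  have hw : ∀ δ : ℝ, 1 < δ → ∀ᶠ n : ℕ in Filter.atTop,
      (Real.sqrt (a (n * R))) ^ ((1 : ℝ) / (n : ℝ)) ≤ δ := by
    intro δ hδ
    have hδ0 : (0 : ℝ) < δ := lt_trans one_pos hδ
    have hRpos : (0 : ℝ) < (R : ℝ) := by exact_mod_cast hR1
    set δ' : ℝ := δ ^ ((2 : ℝ) / (R : ℝ)) with hδ'def
    have hδ'1 : 1 < δ' := by
      rw [hδ'def, Real.one_lt_rpow_iff_of_pos hδ0]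
      exact Or.inl ⟨hδ, by positivity⟩
    have hδ'0 : (0 : ℝ) ≤ δ' := le_of_lt (lt_trans one_pos hδ'1)
    have hev : ∀ᶠ m : ℕ in Filter.atTop, a m ^ ((1 : ℝ) / (m : ℝ)) < δ' := by
      apply Filter.eventually_lt_of_limsup_lt _ hgbd
      rw [hsub']; exact hδ'1
    rw [Filter.eventually_atTop] at hev ⊢
    obtain ⟨m₀, hm₀⟩ := hev
    refine ⟨max m₀ 1, fun n hn => ?_⟩
    have hn1 : 1 ≤ n := le_trans (le_max_right _ _) hn
    have hnR : m₀ ≤ n * R :=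
      le_trans (le_trans (le_max_left _ _) hn) (Nat.le_mul_of_pos_right n (by omega))
    have hnR0 : n * R ≠ 0 := by positivity
    have ha0 : (0 : ℝ) ≤ a (n * R) := by
      rw [hadef]; positivity
    have h4 : a (n * R) < δ' ^ (n * R) := by
      have h5 := hm₀ (n * R) hnR
      have h6 : (a (n * R) ^ ((1 : ℝ) / ((n * R : ℕ) : ℝ))) ^ (n * R)
          < δ' ^ (n * R) :=
        pow_lt_pow_left₀ h5 (Real.rpow_nonneg ha0 _) hnR0
      rwa [one_div, Real.rpow_inv_natCast_pow ha0 hnR0] at h6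
    have h7 : (Real.sqrt (a (n * R))) ^ ((1 : ℝ) / (n : ℝ))
        ≤ (Real.sqrt (δ' ^ (n * R))) ^ ((1 : ℝ) / (n : ℝ)) :=
      Real.rpow_le_rpow (Real.sqrt_nonneg _) (Real.sqrt_le_sqrt h4.le)
        (by positivity)
    refine h7.trans ?_
    have h8 : Real.sqrt (δ' ^ (n * R))
        = δ' ^ ((((n * R : ℕ) : ℝ)) * (1 / 2 : ℝ)) := by
      rw [Real.sqrt_eq_rpow, ← Real.rpow_natCast δ' (n * R), ← Real.rpow_mul hδ'0]
    rw [h8, ← Real.rpow_mul hδ'0]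
    have hn0 : ((n : ℝ)) ≠ 0 := by
      have : (0:ℝ) < (n:ℝ) := by exact_mod_cast hn1
      exact ne_of_gt this
    have h9 : (((n * R : ℕ) : ℝ) * (1 / 2 : ℝ)) * ((1 : ℝ) / (n : ℝ))
        = (R : ℝ) / 2 := by
      push_cast
      field_simp
    rw [h9, hδ'def, ← Real.rpow_mul (le_of_lt hδ0)]
    have h10 : (2 : ℝ) / (R : ℝ) * ((R : ℝ) / 2) = 1 := by
      field_simp
    rw [h10, Real.rpow_one]
  have hL0 : 0 ≤ Filter.limsup v Filter.atTop :=
    Filter.le_limsup_of_frequently_le (Filter.Frequently.of_forall hv_nonneg) hvbd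
  refine le_of_forall_gt_imp_ge_of_dense fun c hc => ?_
  set b : ℝ := (Filter.limsup v Filter.atTop + c) / 2 with hb
  have hb1 : Filter.limsup v Filter.atTop < b := by rw [hb]; linarith
  have hb2 : b < c := by rw [hb]; linarith
  have hb0 : 0 < b := by rw [hb]; linarith
  have hδ : 1 < c / b := (one_lt_div hb0).mpr hb2
  have hev1 := hw (c / b) hδ
  have hev2 : ∀ᶠ n in Filter.atTop, v n < b :=
    Filter.eventually_lt_of_limsup_lt hb1 hvbd
  have hev3 : ∀ᶠ n : ℕ in Filter.atTop, 1 ≤ n := Filter.eventually_ge_atTop 1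
  have hev : ∀ᶠ n in Filter.atTop, u n ≤ c := by
    filter_upwards [hev1, hev2, hev3] with n h1 h2 h3
    calc u n ≤ (Real.sqrt (a (n * R))) ^ ((1 : ℝ) / (n : ℝ)) * v n := hkey n h3
      _ ≤ (c / b) * b :=
          mul_le_mul h1 h2.le (hv_nonneg n) (by positivity)
      _ = c := div_mul_cancel₀ c (ne_of_gt hb0)
  exact Filter.limsup_le_of_le hucb hev
end

section
/- Let G be a group generated by a finite symmetric set, H ≤ G a subgroup, and μ : G → ℝ a finitely supported symmetric probability measure on G (μ ≥ 0, ∑_{g∈G} μ(g) = 1, and μ(g⁻¹) = μ(g) for all g). Then for every n ≥ 1, the probability of return to the coset H after 2n steps satisfies P_{2n}(H,H) = ∑_{h∈H} μ^{(2n)}(h) = ‖μ^{(n)}‖_{(2,1)}², where μ^{(n)} is the n-fold convolution power of μ. -/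
open scoped BigOperators

attribute [local instance] Classical.propDecidable

section Defs

variable {G : Type*} [Group G]

section AuxStatement15
variable {G : Type*} [Group G]

lemma conv_eq_mul (f g : MonoidAlgebra ℝ G) : conv f.coeff g.coeff = (f * g).coeff := by
  rw [MonoidAlgebra.mul_def, MonoidAlgebra.coeff_finsuppSum]
  unfold conv
  refine Finsupp.sum_congr fun z _ => ?_
  rw [MonoidAlgebra.coeff_finsuppSum, Finsupp.mapDomain, Finsupp.smul_sum]
  refine Finsupp.sum_congr fun a _ => ?_
  rw [MonoidAlgebra.coeff_single, Finsupp.smul_single, smul_eq_mul]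

lemma convPow_eq_pow (f : MonoidAlgebra ℝ G) (n : ℕ) : convPow f.coeff n = (f ^ n).coeff := by
  induction n with
  | zero => rw [pow_zero, MonoidAlgebra.one_def]; rfl
  | succ n ih => rw [pow_succ']; rw [← conv_eq_mul, ← ih]; rfl

lemma conv_apply (f g : G →₀ ℝ) (x : G) :
    conv f g x = ∑ z ∈ f.support, f z * g (z⁻¹ * x) := by
  unfold conv
  rw [Finsupp.sum_apply]
  refine Finset.sum_congr rfl fun z hz => ?_
  dsimp only
  rw [Finsupp.smul_apply, smul_eq_mul]
  congr 1
  have hx : x = z * (z⁻¹ * x) := by group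
  rw [hx, Finsupp.mapDomain_apply (mul_right_injective z)]
  group

lemma mul_inv_apply (f g : MonoidAlgebra ℝ G) (hf : ∀ x : G, f.coeff x⁻¹ = f.coeff x)
    (hg : ∀ x : G, g.coeff x⁻¹ = g.coeff x) (x : G) : (f * g).coeff x⁻¹ = (g * f).coeff x := by
  rw [MonoidAlgebra.coeff_mul, MonoidAlgebra.coeff_mul]
  simp only [Finsupp.sum]
  rw [Finset.sum_comm]
  refine Finset.sum_equiv (Equiv.inv G) (fun a => ?_) (fun a ha => ?_)
  · simp only [Equiv.inv_apply, Finsupp.mem_support_iff, not_iff_not]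
    rw [← hg a]
  · refine Finset.sum_equiv (Equiv.inv G) (fun b => ?_) (fun b hb => ?_)
    · simp only [Equiv.inv_apply, Finsupp.mem_support_iff, not_iff_not]
      rw [← hf b]
    · simp only [Equiv.inv_apply]
      have hcond : (b * a = x⁻¹) ↔ (a⁻¹ * b⁻¹ = x) := by
        rw [← mul_inv_rev, inv_eq_iff_eq_inv, eq_comm]
      rw [hf, hg, if_congr hcond rfl rfl, mul_comm]

lemma convPow_symm (μ : G →₀ ℝ) (hsymm : ∀ g : G, μ g⁻¹ = μ g) (n : ℕ) :
    ∀ x : G, convPow μ n x⁻¹ = convPow μ n x := by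
  induction n with
  | zero =>
    intro x
    simp [convPow, Finsupp.single_apply, inv_eq_one, eq_comm]
  | succ n ih =>
    have ih' : ∀ x : G, ((MonoidAlgebra.ofCoeff μ) ^ n).coeff x⁻¹ = ((MonoidAlgebra.ofCoeff μ) ^ n).coeff x := by
      intro x; rw [← convPow_eq_pow]; exact ih x
    intro x
    change convPow (MonoidAlgebra.ofCoeff μ).coeff (n+1) x⁻¹ = convPow (MonoidAlgebra.ofCoeff μ).coeff (n+1) x
    rw [convPow_eq_pow, pow_succ', mul_inv_apply _ _ hsymm ih', ← pow_succ, pow_succ']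

lemma convPow_nonneg (μ : G →₀ ℝ) (hpos : ∀ x, 0 ≤ μ x) (n : ℕ) :
    ∀ x : G, 0 ≤ convPow μ n x := by
  induction n with
  | zero =>
    intro x
    show (0:ℝ) ≤ (Finsupp.single (1:G) (1:ℝ)) x
    rw [Finsupp.single_apply]
    split <;> norm_num
  | succ n ih =>
    intro x
    show (0:ℝ) ≤ conv μ (convPow μ n) x
    rw [conv_apply]
    exact Finset.sum_nonneg fun z _ => mul_nonneg (hpos z) (ih _)



lemma mapDomain_quot_apply (H : Subgroup G) (X : G →₀ ℝ) (q : G ⧸ H) :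
    (Finsupp.mapDomain (QuotientGroup.mk : G → G ⧸ H) X) q
      = ∑ x ∈ X.support.filter (fun x : G => (QuotientGroup.mk x : G ⧸ H) = q), X x := by
  rw [Finsupp.mapDomain, Finsupp.sum_apply, Finsupp.sum, Finset.sum_filter]
  exact Finset.sum_congr rfl fun x _ => by rw [Finsupp.single_apply]

lemma mapDomain_quot_nonneg (H : Subgroup G) (X : G →₀ ℝ) (hX : ∀ x, 0 ≤ X x) (q : G ⧸ H) :
    0 ≤ (Finsupp.mapDomain (QuotientGroup.mk : G → G ⧸ H) X) q := by
  rw [mapDomain_quot_apply]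
  exact Finset.sum_nonneg fun x _ => hX x

end AuxStatement15

end Defs
/-- for a finitely supported symmetric probability measure `μ`,
the return probability to the coset `H` after `2n` steps satisfies
`P_{2n}(H,H) = ‖μ^{(n)}‖_{(2,1)}²`. -/
theorem statement15 {G : Type*} [Group G] (S : Set G) (hfin : S.Finite)
    (hsym : ∀ s ∈ S, s⁻¹ ∈ S) (hgen : Subgroup.closure S = ⊤) (H : Subgroup G)
    (μ : G →₀ ℝ) (hpos : ∀ x, 0 ≤ μ x) (hsum : ∑ x ∈ μ.support, μ x = 1)
    (hsymm : ∀ g : G, μ g⁻¹ = μ g) :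
    ∀ n : ℕ, 1 ≤ n →
      sumOverSubgroup H (convPow μ (2 * n)) = (l21Norm H (convPow μ n)) ^ 2 := by
  intro n hn
  classical
  set f : G →₀ ℝ := convPow μ n with hfdef
  have hfpos : ∀ x, 0 ≤ f x := convPow_nonneg μ hpos n
  have hfsymm : ∀ x : G, f x⁻¹ = f x := convPow_symm μ hsymm n
  set F : (G ⧸ H) →₀ ℝ := Finsupp.mapDomain (QuotientGroup.mk : G → G ⧸ H) f with hFdef
  set q₀ : G ⧸ H := QuotientGroup.mk (1 : G) with hq₀
  have h2n : convPow μ (2 * n) = conv f f := by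
    rw [hfdef]
    change convPow (MonoidAlgebra.ofCoeff μ).coeff (2 * n) = conv (convPow (MonoidAlgebra.ofCoeff μ).coeff n) (convPow (MonoidAlgebra.ofCoeff μ).coeff n)
    rw [convPow_eq_pow, convPow_eq_pow, conv_eq_mul, two_mul, pow_add]
  have hL1 : sumOverSubgroup H (conv f f)
      = (Finsupp.mapDomain (QuotientGroup.mk : G → G ⧸ H) (conv f f)) q₀ := by
    rw [mapDomain_quot_apply, sumOverSubgroup]
    refine Finset.sum_congr (Finset.filter_congr fun x _ => ?_) fun _ _ => rfl
    rw [hq₀]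
    simp [QuotientGroup.eq, inv_mem_iff]
  have hL2 : Finsupp.mapDomain (QuotientGroup.mk : G → G ⧸ H) (conv f f)
      = f.sum fun z c => c • Finsupp.mapDomain (fun q : G ⧸ H => z • q) F := by
    rw [conv, Finsupp.mapDomain_sum]
    refine Finsupp.sum_congr fun z _ => ?_
    rw [Finsupp.mapDomain_smul]
    congr 1
    have hcomp : ((QuotientGroup.mk : G → G ⧸ H) ∘ fun x => z * x)
        = (fun q : G ⧸ H => z • q) ∘ (QuotientGroup.mk : G → G ⧸ H) :=
      funext fun x => (MulAction.Quotient.smul_mk H z x).symm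
    rw [hFdef, ← Finsupp.mapDomain_comp, ← Finsupp.mapDomain_comp, hcomp]
  have hL3 : (f.sum fun z c => c • Finsupp.mapDomain (fun q : G ⧸ H => z • q) F) q₀
      = ∑ z ∈ f.support, f z * F (QuotientGroup.mk z⁻¹) := by
    rw [Finsupp.sum_apply, Finsupp.sum]
    refine Finset.sum_congr rfl fun z hz => ?_
    rw [Finsupp.smul_apply, smul_eq_mul]
    congr 1
    have hq : q₀ = z • (QuotientGroup.mk z⁻¹ : G ⧸ H) := by
      rw [hq₀, MulAction.Quotient.smul_mk]
      simp
    rw [hq, Finsupp.mapDomain_apply (MulAction.injective z)]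
  have hL4 : ∑ z ∈ f.support, f z * F (QuotientGroup.mk z⁻¹)
      = ∑ z ∈ f.support, f z * F (QuotientGroup.mk z) := by
    refine Finset.sum_equiv (Equiv.inv G) (fun z => ?_) (fun z hz => ?_)
    · simp only [Equiv.inv_apply, Finsupp.mem_support_iff, not_iff_not]
      rw [← hfsymm z]
    · simp only [Equiv.inv_apply]
      rw [hfsymm]
  have hL5 : (∑ z ∈ f.support, f z * F (QuotientGroup.mk z))
      = ∑ q ∈ F.support, F q * F q := by
    have h := Finsupp.sum_mapDomain_index
      (f := (QuotientGroup.mk : G → G ⧸ H)) (s := f)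
      (h := fun q (c : ℝ) => c * F q) (fun q => zero_mul _)
      (fun q m₁ m₂ => add_mul m₁ m₂ _)
    rw [← hFdef] at h
    rw [Finsupp.sum, Finsupp.sum] at h
    exact h.symm
  have hR : (l21Norm H f) ^ 2 = ∑ q ∈ F.support, F q * F q := by
    have hmr : f.mapRange norm norm_zero = f := by
      ext x
      simp [Real.norm_of_nonneg (hfpos x)]
    rw [l21Norm, hmr, ← hFdef, l2Norm,
      Real.sq_sqrt (Finset.sum_nonneg fun q _ => sq_nonneg _)]
    exact Finset.sum_congr rfl fun q _ => by rw [Real.norm_eq_abs, sq_abs, sq]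
  rw [h2n, hL1, hL2, hL3, hL4, hL5, hR]
end
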